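/- Fix a real number p with 0 < p < 1, ε with 0 < ε < 1/2, and λ with 0 < λ < 1/(1 + e·q) where q = 1/p; for each n let r = r(n) = ⌊z(n,p) − ε⌋. Then there exists N > 0 such that for all n ≥ N the following holds for all α ∈ D and α' ∈ D obtained from α by adding 1 to one coordinate, say the coordinate whose value in α is x: (1) if x ≤ (1−λ)·log_q n then T_α > T_{α'}; (2) if x ≥ (1+λ)·log_q n then T_α < T_{α'}. -/

import Mathlib

open Finset Filter

set_option maxHeartbeats 1000000

noncomputable section

/-- `z(n,p) = 2 log_q n − 2 log_q log_q n + 2 log_q (e/2) + 1`, where `q = 1/p`. -/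
def zf (p : ℝ) (n : ℕ) : ℝ :=
  2 * Real.logb p⁻¹ n - 2 * Real.logb p⁻¹ (Real.logb p⁻¹ n)
    + 2 * Real.logb p⁻¹ (Real.exp 1 / 2) + 1

/-- The set `D` of vectors `(a,b,c,d)` of nonnegative integers with
`a+b ≤ r`, `a+c ≤ r`, `c+d ≤ r`, `b+d ≤ r`. -/
def Dset (r : ℕ) : Finset (ℕ × ℕ × ℕ × ℕ) :=
  (Finset.range (r+1) ×ˢ Finset.range (r+1) ×ˢ Finset.range (r+1) ×ˢ Finset.range (r+1)).filter
    (fun α => α.1 + α.2.1 ≤ r ∧ α.1 + α.2.2.1 ≤ r ∧ α.2.2.1 + α.2.2.2 ≤ r ∧ α.2.1 + α.2.2.2 ≤ r)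

/-- The coefficient `F_α` for `α = (a,b,c,d)`. -/
def Fa (n r : ℕ) (α : ℕ × ℕ × ℕ × ℕ) : ℝ :=
  match α with
  | (a, b, c, d) =>
    ((r.factorial : ℝ) / ((a.factorial : ℝ) * c.factorial * (r - a - c).factorial)) *
    ((r.factorial : ℝ) / ((b.factorial : ℝ) * d.factorial * (r - b - d).factorial)) *
    (((n - 2*r).factorial : ℝ) /
      (((r - a - b).factorial : ℝ) * (r - c - d).factorial * (n - 4*r + a + b + c + d).factorial)) /
    ((n.factorial : ℝ) / ((r.factorial : ℝ) * r.factorial * (n - 2*r).factorial))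

/-- `L(α) = C(a,2) + C(b,2) + C(c,2) + C(d,2)`. -/
def La (α : ℕ × ℕ × ℕ × ℕ) : ℕ :=
  α.1.choose 2 + α.2.1.choose 2 + α.2.2.1.choose 2 + α.2.2.2.choose 2

/-- `T_α = F_α · q^{L(α)}` with `q = 1/p`. -/
def Ta (n r : ℕ) (p : ℝ) (α : ℕ × ℕ × ℕ × ℕ) : ℝ := Fa n r α * (p⁻¹) ^ (La α)

/-- Increase the `i`-th coordinate of `α` by `1`. -/
def bump (i : Fin 4) (α : ℕ × ℕ × ℕ × ℕ) : ℕ × ℕ × ℕ × ℕ :=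
  if i.val = 0 then (α.1 + 1, α.2.1, α.2.2.1, α.2.2.2)
  else if i.val = 1 then (α.1, α.2.1 + 1, α.2.2.1, α.2.2.2)
  else if i.val = 2 then (α.1, α.2.1, α.2.2.1 + 1, α.2.2.2)
  else (α.1, α.2.1, α.2.2.1, α.2.2.2 + 1)

/-- The `i`-th coordinate of `α`. -/
def coordv (i : Fin 4) (α : ℕ × ℕ × ℕ × ℕ) : ℕ :=
  if i.val = 0 then α.1 else if i.val = 1 then α.2.1
  else if i.val = 2 then α.2.2.1 else α.2.2.2

/- ### Auxiliary lemmas -/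

lemma Fa_pos (n r : ℕ) (α : ℕ × ℕ × ℕ × ℕ) : 0 < Fa n r α := by
  obtain ⟨a, b, c, d⟩ := α
  have h : ∀ m : ℕ, (0:ℝ) < m.factorial := fun m => by exact_mod_cast m.factorial_pos
  simp only [Fa]
  exact div_pos (mul_pos (mul_pos
      (div_pos (h _) (mul_pos (mul_pos (h _) (h _)) (h _)))
      (div_pos (h _) (mul_pos (mul_pos (h _) (h _)) (h _))))
      (div_pos (h _) (mul_pos (mul_pos (h _) (h _)) (h _))))
    (div_pos (h _) (mul_pos (mul_pos (h _) (h _)) (h _)))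

lemma Ta_pos (n r : ℕ) {p : ℝ} (hp : 0 < p) (α : ℕ × ℕ × ℕ × ℕ) : 0 < Ta n r p α :=
  mul_pos (Fa_pos n r α) (pow_pos (inv_pos.mpr hp) _)

lemma choose2_succ (x : ℕ) : (x+1).choose 2 = x.choose 2 + x := by
  rw [Nat.choose_succ_succ, Nat.choose_one_right, Nat.add_comm]

lemma Fa_bump0 (n r a b c d : ℕ) (h1 : a + 1 + c ≤ r) (h2 : a + 1 + b ≤ r) :
    Fa n r (a+1, b, c, d) * (((a:ℝ)+1) * (((n - 4*r + a + b + c + d : ℕ) : ℝ) + 1))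
      = Fa n r (a, b, c, d) * (((r - a - c : ℕ) : ℝ) * ((r - a - b : ℕ) : ℝ)) := by
  have e1 : r - (a+1) - c = (r - a - c) - 1 := by omega
  have e2 : r - (a+1) - b = (r - a - b) - 1 := by omega
  have e3 : n - 4*r + (a+1) + b + c + d = (n - 4*r + a + b + c + d) + 1 := by omega
  have p1 : 0 < r - a - c := by omega
  have p2 : 0 < r - a - b := by omega
  simp only [Fa]
  rw [e1, e2, e3, Nat.factorial_succ a, Nat.factorial_succ (n - 4*r + a + b + c + d),
    ← Nat.mul_factorial_pred p1.ne', ← Nat.mul_factorial_pred p2.ne']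
  have nz : ∀ m : ℕ, ((m.factorial : ℝ)) ≠ 0 := fun m => Nat.cast_ne_zero.mpr (Nat.factorial_ne_zero m)
  have z1 : ((r - a - c : ℕ) : ℝ) ≠ 0 := Nat.cast_ne_zero.mpr p1.ne'
  have z2 : ((r - a - b : ℕ) : ℝ) ≠ 0 := Nat.cast_ne_zero.mpr p2.ne'
  push_cast
  field_simp

lemma Fa_bump1 (n r a b c d : ℕ) (h1 : b + 1 + d ≤ r) (h2 : a + (b + 1) ≤ r) :
    Fa n r (a, b+1, c, d) * (((b:ℝ)+1) * (((n - 4*r + a + b + c + d : ℕ) : ℝ) + 1))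
      = Fa n r (a, b, c, d) * (((r - b - d : ℕ) : ℝ) * ((r - a - b : ℕ) : ℝ)) := by
  have e1 : r - (b+1) - d = (r - b - d) - 1 := by omega
  have e2 : r - a - (b+1) = (r - a - b) - 1 := by omega
  have e3 : n - 4*r + a + (b+1) + c + d = (n - 4*r + a + b + c + d) + 1 := by omega
  have p1 : 0 < r - b - d := by omega
  have p2 : 0 < r - a - b := by omega
  simp only [Fa]
  rw [e1, e2, e3, Nat.factorial_succ b, Nat.factorial_succ (n - 4*r + a + b + c + d),
    ← Nat.mul_factorial_pred p1.ne', ← Nat.mul_factorial_pred p2.ne']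
  have nz : ∀ m : ℕ, ((m.factorial : ℝ)) ≠ 0 := fun m => Nat.cast_ne_zero.mpr (Nat.factorial_ne_zero m)
  have z1 : ((r - b - d : ℕ) : ℝ) ≠ 0 := Nat.cast_ne_zero.mpr p1.ne'
  have z2 : ((r - a - b : ℕ) : ℝ) ≠ 0 := Nat.cast_ne_zero.mpr p2.ne'
  push_cast
  field_simp

lemma Fa_bump2 (n r a b c d : ℕ) (h1 : a + (c + 1) ≤ r) (h2 : c + 1 + d ≤ r) :
    Fa n r (a, b, c+1, d) * (((c:ℝ)+1) * (((n - 4*r + a + b + c + d : ℕ) : ℝ) + 1))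
      = Fa n r (a, b, c, d) * (((r - a - c : ℕ) : ℝ) * ((r - c - d : ℕ) : ℝ)) := by
  have e1 : r - a - (c+1) = (r - a - c) - 1 := by omega
  have e2 : r - (c+1) - d = (r - c - d) - 1 := by omega
  have e3 : n - 4*r + a + b + (c+1) + d = (n - 4*r + a + b + c + d) + 1 := by omega
  have p1 : 0 < r - a - c := by omega
  have p2 : 0 < r - c - d := by omega
  simp only [Fa]
  rw [e1, e2, e3, Nat.factorial_succ c, Nat.factorial_succ (n - 4*r + a + b + c + d),
    ← Nat.mul_factorial_pred p1.ne', ← Nat.mul_factorial_pred p2.ne']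
  have nz : ∀ m : ℕ, ((m.factorial : ℝ)) ≠ 0 := fun m => Nat.cast_ne_zero.mpr (Nat.factorial_ne_zero m)
  have z1 : ((r - a - c : ℕ) : ℝ) ≠ 0 := Nat.cast_ne_zero.mpr p1.ne'
  have z2 : ((r - c - d : ℕ) : ℝ) ≠ 0 := Nat.cast_ne_zero.mpr p2.ne'
  push_cast
  field_simp

lemma Fa_bump3 (n r a b c d : ℕ) (h1 : b + (d + 1) ≤ r) (h2 : c + (d + 1) ≤ r) :
    Fa n r (a, b, c, d+1) * (((d:ℝ)+1) * (((n - 4*r + a + b + c + d : ℕ) : ℝ) + 1))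
      = Fa n r (a, b, c, d) * (((r - b - d : ℕ) : ℝ) * ((r - c - d : ℕ) : ℝ)) := by
  have e1 : r - b - (d+1) = (r - b - d) - 1 := by omega
  have e2 : r - c - (d+1) = (r - c - d) - 1 := by omega
  have e3 : n - 4*r + a + b + c + (d+1) = (n - 4*r + a + b + c + d) + 1 := by omega
  have p1 : 0 < r - b - d := by omega
  have p2 : 0 < r - c - d := by omega
  simp only [Fa]
  rw [e1, e2, e3, Nat.factorial_succ d, Nat.factorial_succ (n - 4*r + a + b + c + d),
    ← Nat.mul_factorial_pred p1.ne', ← Nat.mul_factorial_pred p2.ne']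
  have nz : ∀ m : ℕ, ((m.factorial : ℝ)) ≠ 0 := fun m => Nat.cast_ne_zero.mpr (Nat.factorial_ne_zero m)
  have z1 : ((r - b - d : ℕ) : ℝ) ≠ 0 := Nat.cast_ne_zero.mpr p1.ne'
  have z2 : ((r - c - d : ℕ) : ℝ) ≠ 0 := Nat.cast_ne_zero.mpr p2.ne'
  push_cast
  field_simp

/-- The key analytic step: given the exact ratio identity, derive both inequalities. -/
lemma main_ineq {p lam : ℝ} (hp0 : 0 < p) (hq : 1 < p⁻¹)
    (hlam0 : 0 < lam) (hlam1 : lam < 1)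
    (n r x A B k : ℕ) (T T' : ℝ) (hT : 0 < T)
    (heq : T' * (((x:ℝ)+1) * ((k:ℝ)+1)) = T * ((A:ℝ) * (B:ℝ) * (p⁻¹)^x))
    (hA1 : 1 ≤ A) (hB1 : 1 ≤ B) (hAr : A ≤ r) (hBr : B ≤ r) (hx1 : x + 1 ≤ r)
    (hkl : n - 4*r ≤ k) (hkh : k ≤ n)
    (hL2 : 2 ≤ Real.logb p⁻¹ n) (hr3 : (r:ℝ) ≤ 3 * Real.logb p⁻¹ n)
    (h18 : 18 * (Real.logb p⁻¹ n)^2 < (n:ℝ) ^ lam) (hn1 : 1 ≤ n) (h8r : 8*r ≤ n) :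
    (((x:ℝ)) ≤ (1-lam) * Real.logb p⁻¹ n → T' < T) ∧
    ((1+lam) * Real.logb p⁻¹ n ≤ (x:ℝ) → T < T') := by
  set L := Real.logb p⁻¹ n with hL
  have hq0 : (0:ℝ) < p⁻¹ := inv_pos.mpr hp0
  have npos : (0:ℝ) < (n:ℝ) := by exact_mod_cast hn1
  have hLpos : 0 < L := by linarith
  have hqLn : (p⁻¹) ^ L = (n:ℝ) := Real.rpow_logb hq0 hq.ne' npos
  have hqx_pos : (0:ℝ) < (p⁻¹)^x := pow_pos hq0 _
  have hDpos : (0:ℝ) < ((x:ℝ)+1) * ((k:ℝ)+1) := by positivity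
  have hkl' : (n:ℝ) - 4*(r:ℝ) ≤ (k:ℝ) := by
    have : ((n - 4*r : ℕ) : ℝ) ≤ (k:ℝ) := by exact_mod_cast hkl
    have h4 : 4*r ≤ n := by omega
    rw [Nat.cast_sub h4] at this
    push_cast at this ⊢
    linarith
  have hAB1 : (1:ℝ) ≤ (A:ℝ) * (B:ℝ) := by
    have : (1:ℝ) ≤ (A:ℝ) := by exact_mod_cast hA1
    have h2 : (1:ℝ) ≤ (B:ℝ) := by exact_mod_cast hB1
    nlinarith
  constructor
  · intro hx
    -- q^x ≤ n^(1-lam)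
    have hqx : (p⁻¹)^x ≤ (n:ℝ) ^ (1-lam) := by
      calc (p⁻¹)^x = (p⁻¹) ^ ((x:ℕ):ℝ) := (Real.rpow_natCast _ x).symm
        _ ≤ (p⁻¹) ^ (L * (1-lam)) := by
            apply Real.rpow_le_rpow_of_exponent_le hq.le
            rw [mul_comm]; exact hx
        _ = ((p⁻¹) ^ L) ^ (1-lam) := Real.rpow_mul hq0.le _ _
        _ = (n:ℝ) ^ (1-lam) := by rw [hqLn]
    have hA3 : (A:ℝ) ≤ 3*L := le_trans (by exact_mod_cast hAr) hr3
    have hB3 : (B:ℝ) ≤ 3*L := le_trans (by exact_mod_cast hBr) hr3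
    have hApos : (0:ℝ) ≤ (A:ℝ) := Nat.cast_nonneg _
    have hBpos : (0:ℝ) ≤ (B:ℝ) := Nat.cast_nonneg _
    have hpow_pos : (0:ℝ) < (n:ℝ) ^ (1-lam) := Real.rpow_pos_of_pos npos _
    have c1 : (A:ℝ) * (B:ℝ) * (p⁻¹)^x ≤ (3*L) * (3*L) * ((n:ℝ) ^ (1-lam)) := by
      have t1 : (A:ℝ) * (B:ℝ) ≤ (3*L) * (3*L) :=
        mul_le_mul hA3 hB3 hBpos (by linarith)
      exact mul_le_mul t1 hqx hqx_pos.le (by nlinarith)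
    have hmul : (n:ℝ) ^ lam * (n:ℝ) ^ (1-lam) = (n:ℝ) := by
      rw [← Real.rpow_add npos]; norm_num
    have c2 : (3*L) * (3*L) * ((n:ℝ) ^ (1-lam)) < (n:ℝ)/2 := by
      have h9 : 9 * L^2 < (n:ℝ)^lam / 2 := by linarith
      calc (3*L) * (3*L) * ((n:ℝ) ^ (1-lam)) = 9*L^2 * ((n:ℝ) ^ (1-lam)) := by ring
        _ < ((n:ℝ)^lam/2) * ((n:ℝ) ^ (1-lam)) := mul_lt_mul_of_pos_right h9 hpow_pos
        _ = (n:ℝ)/2 := by rw [div_mul_eq_mul_div, hmul]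
    have c3 : (n:ℝ)/2 ≤ ((x:ℝ)+1) * ((k:ℝ)+1) := by
      have hr8 : 8*(r:ℝ) ≤ (n:ℝ) := by exact_mod_cast h8r
      have hk2 : (n:ℝ)/2 ≤ (k:ℝ)+1 := by linarith
      have hx0 : (1:ℝ) ≤ (x:ℝ)+1 := by
        have := Nat.cast_nonneg (α := ℝ) x; linarith
      calc (n:ℝ)/2 ≤ (k:ℝ)+1 := hk2
        _ = 1 * ((k:ℝ)+1) := (one_mul _).symm
        _ ≤ ((x:ℝ)+1) * ((k:ℝ)+1) := by
            apply mul_le_mul_of_nonneg_right hx0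
            linarith
    have hM : (A:ℝ) * (B:ℝ) * (p⁻¹)^x < ((x:ℝ)+1) * ((k:ℝ)+1) := by linarith
    have : T' * (((x:ℝ)+1) * ((k:ℝ)+1)) < T * (((x:ℝ)+1) * ((k:ℝ)+1)) := by
      rw [heq]; exact mul_lt_mul_of_pos_left hM hT
    exact lt_of_mul_lt_mul_right this hDpos.le
  · intro hx
    have hqx : (n:ℝ) ^ (1+lam) ≤ (p⁻¹)^x := by
      calc (n:ℝ) ^ (1+lam) = ((p⁻¹) ^ L) ^ (1+lam) := by rw [hqLn]
        _ = (p⁻¹) ^ (L * (1+lam)) := (Real.rpow_mul hq0.le _ _).symm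
        _ ≤ (p⁻¹) ^ ((x:ℕ):ℝ) := by
            apply Real.rpow_le_rpow_of_exponent_le hq.le
            rw [mul_comm]; exact hx
        _ = (p⁻¹)^x := Real.rpow_natCast _ x
    have hx3 :2 * ((x:ℝ)+1) ≤ 6*L := by
      have : ((x:ℝ)+1) ≤ (r:ℝ) := by exact_mod_cast hx1
      linarith
    have hk2 : (k:ℝ)+1 ≤ 2*(n:ℝ) := by
      have : (k:ℝ) ≤ (n:ℝ) := by exact_mod_cast hkh
      have : (1:ℝ) ≤ (n:ℝ) := by exact_mod_cast hn1
      linarith [(by exact_mod_cast hkh : (k:ℝ) ≤ (n:ℝ))]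
    have hmul : (n:ℝ) ^ lam * (n:ℝ) = (n:ℝ) ^ (1+lam) := by
      rw [Real.rpow_add npos, Real.rpow_one]; ring
    have c1 : ((x:ℝ)+1) * ((k:ℝ)+1) ≤ (3*L) * (2*(n:ℝ)) := by
      have hk0 : (0:ℝ) ≤ (k:ℝ)+1 := by positivity
      apply mul_le_mul (by linarith) hk2 hk0 (by linarith)
    have c2 : (3*L) * (2*(n:ℝ)) < (n:ℝ) ^ (1+lam) := by
      have h6 : 6*L ≤ 18*L^2 := by nlinarith
      have t1 : 6*L*(n:ℝ) ≤ 18*L^2*(n:ℝ) := mul_le_mul_of_nonneg_right h6 npos.le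
      have t2 : 18*L^2*(n:ℝ) < (n:ℝ)^lam * (n:ℝ) := mul_lt_mul_of_pos_right h18 npos
      calc (3*L) * (2*(n:ℝ)) = 6*L*(n:ℝ) := by ring
        _ ≤ 18*L^2*(n:ℝ) := t1
        _ < (n:ℝ)^lam * (n:ℝ) := t2
        _ = (n:ℝ) ^ (1+lam) := hmul
    have c3 : (n:ℝ) ^ (1+lam) ≤ (A:ℝ) * (B:ℝ) * (p⁻¹)^x := by
      calc (n:ℝ) ^ (1+lam) ≤ (p⁻¹)^x := hqx
        _ = 1 * (p⁻¹)^x := (one_mul _).symm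
        _ ≤ (A:ℝ) * (B:ℝ) * (p⁻¹)^x := mul_le_mul_of_nonneg_right hAB1 hqx_pos.le
    have hM : ((x:ℝ)+1) * ((k:ℝ)+1) < (A:ℝ) * (B:ℝ) * (p⁻¹)^x := by linarith
    have : T * (((x:ℝ)+1) * ((k:ℝ)+1)) < T' * (((x:ℝ)+1) * ((k:ℝ)+1)) := by
      rw [heq]; exact mul_lt_mul_of_pos_left hM hT
    exact lt_of_mul_lt_mul_right this hDpos.le

theorem stmt15 (p ε lam : ℝ) (hp0 : 0 < p) (hp1 : p < 1) (hε : 0 < ε) (hε' : ε < 1/2)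
    (hlam0 : 0 < lam) (hlam1 : lam < 1 / (1 + Real.exp 1 * p⁻¹)) :
    ∃ N : ℕ, ∀ n : ℕ, N ≤ n → ∀ i : Fin 4, ∀ α : ℕ × ℕ × ℕ × ℕ,
      α ∈ Dset ⌊zf p n - ε⌋.toNat → bump i α ∈ Dset ⌊zf p n - ε⌋.toNat →
      (((coordv i α : ℝ) ≤ (1 - lam) * Real.logb p⁻¹ n →
          Ta n ⌊zf p n - ε⌋.toNat p (bump i α) < Ta n ⌊zf p n - ε⌋.toNat p α) ∧
       ((1 + lam) * Real.logb p⁻¹ n ≤ (coordv i α : ℝ) →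
          Ta n ⌊zf p n - ε⌋.toNat p α < Ta n ⌊zf p n - ε⌋.toNat p (bump i α))) := by
  have hq : 1 < p⁻¹ := (one_lt_inv_iff₀.mpr ⟨hp0, hp1⟩)
  have hq0 : (0:ℝ) < p⁻¹ := inv_pos.mpr hp0
  have hlam1' : lam < 1 := by
    have h1 : (0:ℝ) < 1 + Real.exp 1 * p⁻¹ := by positivity
    have h2 : (1:ℝ) < 1 + Real.exp 1 * p⁻¹ := by
      have := Real.exp_pos 1
      nlinarith
    have : 1 / (1 + Real.exp 1 * p⁻¹) < 1 := by
      rw [div_lt_one h1]; exact h2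
    linarith
  set C0 : ℝ := 2 * Real.logb p⁻¹ (Real.exp 1 / 2) + 1 with hC0
  -- eventual facts
  have hTend : Tendsto (fun n : ℕ => Real.logb p⁻¹ n) atTop atTop :=
    (Real.tendsto_logb_atTop hq).comp tendsto_natCast_atTop_atTop
  have hev1 : ∀ᶠ n : ℕ in atTop, max 2 C0 ≤ Real.logb p⁻¹ n := hTend.eventually_ge_atTop _
  have hev2 : ∀ᶠ n : ℕ in atTop, 18 * (Real.logb p⁻¹ n)^2 < (n:ℝ) ^ lam := by
    have hlogq : 0 < Real.log p⁻¹ := Real.log_pos hq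
    have hlo := isLittleO_log_rpow_rpow_atTop (2:ℝ) hlam0
    have hb := hlo.def (show (0:ℝ) < Real.log p⁻¹ ^ 2 / 37 by positivity)
    have hevR : ∀ᶠ x : ℝ in atTop, 18 * (Real.logb p⁻¹ x)^2 < x ^ lam := by
      filter_upwards [hb, eventually_ge_atTop (1:ℝ), eventually_gt_atTop (0:ℝ)] with x hx hx1 hx0
      have hlx : 0 ≤ Real.log x := Real.log_nonneg hx1
      have hpl : (0:ℝ) < x ^ lam := Real.rpow_pos_of_pos hx0 _
      rw [Real.norm_eq_abs, Real.norm_eq_abs, abs_of_nonneg (Real.rpow_nonneg hlx _),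
        abs_of_nonneg hpl.le] at hx
      have h2 : Real.log x ^ (2:ℝ) = (Real.log x)^2 := by
        rw [show ((2:ℝ) = ((2:ℕ):ℝ)) by norm_num, Real.rpow_natCast]
      rw [h2] at hx
      have hlogb : Real.logb p⁻¹ x = Real.log x / Real.log p⁻¹ := rfl
      rw [hlogb, div_pow]
      have hq2 : (0:ℝ) < Real.log p⁻¹ ^ 2 := by positivity
      have key : Real.log x ^ 2 / Real.log p⁻¹ ^ 2 ≤ x ^ lam / 37 := by
        rw [div_le_div_iff₀ hq2 (by norm_num)]
        nlinarith
      linarith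
    exact tendsto_natCast_atTop_atTop.eventually hevR
  have hev3 : ∀ᶠ n : ℕ in atTop, 1 ≤ n := eventually_ge_atTop 1
  obtain ⟨N, hN⟩ := eventually_atTop.mp ((hev1.and hev2).and hev3)
  refine ⟨N, fun n hn i α hα hα' => ?_⟩
  obtain ⟨⟨hLC, h18⟩, hn1⟩ := hN n hn
  set r := ⌊zf p n - ε⌋.toNat with hrdef
  set L := Real.logb p⁻¹ n with hLdef
  have hL2 : 2 ≤ L := le_trans (le_max_left _ _) hLC
  have hLC0 : C0 ≤ L := le_trans (le_max_right _ _) hLC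
  have npos : (0:ℝ) < (n:ℝ) := by exact_mod_cast hn1
  -- r ≤ 3 L
  have hr3 : (r:ℝ) ≤ 3 * L := by
    rcases le_or_gt (zf p n - ε) 0 with h | h
    · have : r = 0 := by
        rw [hrdef, Int.toNat_of_nonpos (Int.floor_nonpos h)]
      rw [this]; push_cast; linarith
    · have hfl : (r:ℝ) ≤ zf p n - ε := by
        rw [hrdef, Int.floor_toNat]
        exact Nat.floor_le h.le
      have hlogbL : 0 ≤ Real.logb p⁻¹ L := Real.logb_nonneg hq (by linarith)
      have hz : zf p n - ε ≤ 2*L + C0 := by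
        rw [zf, hC0]
        simp only [← hLdef]
        linarith
      linarith
  -- 8 r ≤ n
  have h8r : 8 * r ≤ n := by
    have h1 : (n:ℝ)^lam ≤ (n:ℝ) := by
      calc (n:ℝ)^lam ≤ (n:ℝ)^(1:ℝ) :=
        Real.rpow_le_rpow_of_exponent_le (by exact_mod_cast hn1) hlam1'.le
        _ = (n:ℝ) := Real.rpow_one _
    have h2 : 8*(r:ℝ) ≤ 24*L := by linarith
    have h3 : 24*L ≤ 18*L^2 := by nlinarith
    have : (8*r : ℝ) < (n:ℝ) := by linarith
    exact_mod_cast this.le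
  -- now split on i and destructure α
  obtain ⟨a, b, c, d⟩ := α
  have hmem : a + b ≤ r ∧ a + c ≤ r ∧ c + d ≤ r ∧ b + d ≤ r :=
    (Finset.mem_filter.mp hα).2
  obtain ⟨hab, hac, hcd, hbd⟩ := hmem
  have hmem' := (Finset.mem_filter.mp hα').2
  have hTpos : 0 < Ta n r p (a, b, c, d) := Ta_pos n r hp0 _
  set k := n - 4*r + a + b + c + d with hkdef
  have hkl : n - 4*r ≤ k := by omega
  have hkh : k ≤ n := by omega
  fin_cases i
  · -- bump a
    simp only [bump, coordv] at hα' hmem' ⊢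
    norm_num at hα' hmem' ⊢
    obtain ⟨h1, h2, -, -⟩ := hmem'
    have h1' : a + 1 + c ≤ r := by omega
    have h2' : a + 1 + b ≤ r := by omega
    have hFa := Fa_bump0 n r a b c d h1' h2'
    have hLa : La (a+1, b, c, d) = La (a, b, c, d) + a := by
      simp [La, choose2_succ]; ring
    have heq : Ta n r p (a+1, b, c, d) * (((a:ℝ)+1) * ((k:ℝ)+1))
        = Ta n r p (a, b, c, d) * (((r-a-c : ℕ):ℝ) * ((r-a-b : ℕ):ℝ) * (p⁻¹)^a) := by
      simp only [Ta, hLa, pow_add]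
      rw [hkdef]
      linear_combination ((p⁻¹) ^ La (a, b, c, d) * (p⁻¹)^a) * hFa
    exact main_ineq hp0 hq hlam0 hlam1' n r a (r-a-c) (r-a-b) k _ _ hTpos heq
      (by omega) (by omega) (by omega) (by omega) (by omega) hkl hkh hL2 hr3 h18 hn1 h8r
  · -- bump b
    simp only [bump, coordv] at hα' hmem' ⊢
    norm_num at hα' hmem' ⊢
    obtain ⟨h1, -, -, h2⟩ := hmem'
    have h1' : b + 1 + d ≤ r := by omega
    have h2' : a + (b + 1) ≤ r := by omega
    have hFa := Fa_bump1 n r a b c d h1' h2'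
    have hLa : La (a, b+1, c, d) = La (a, b, c, d) + b := by
      simp [La, choose2_succ]; ring
    have heq : Ta n r p (a, b+1, c, d) * (((b:ℝ)+1) * ((k:ℝ)+1))
        = Ta n r p (a, b, c, d) * (((r-b-d : ℕ):ℝ) * ((r-a-b : ℕ):ℝ) * (p⁻¹)^b) := by
      simp only [Ta, hLa, pow_add]
      rw [hkdef]
      linear_combination ((p⁻¹) ^ La (a, b, c, d) * (p⁻¹)^b) * hFa
    exact main_ineq hp0 hq hlam0 hlam1' n r b (r-b-d) (r-a-b) k _ _ hTpos heq
      (by omega) (by omega) (by omega) (by omega) (by omega) hkl hkh hL2 hr3 h18 hn1 h8r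
  · -- bump c
    simp only [bump, coordv] at hα' hmem' ⊢
    norm_num at hα' hmem' ⊢
    obtain ⟨-, h1, h2, -⟩ := hmem'
    have h1' : a + (c + 1) ≤ r := by omega
    have h2' : c + 1 + d ≤ r := by omega
    have hFa := Fa_bump2 n r a b c d h1' h2'
    have hLa : La (a, b, c+1, d) = La (a, b, c, d) + c := by
      simp [La, choose2_succ]; ring
    have heq : Ta n r p (a, b, c+1, d) * (((c:ℝ)+1) * ((k:ℝ)+1))
        = Ta n r p (a, b, c, d) * (((r-a-c : ℕ):ℝ) * ((r-c-d : ℕ):ℝ) * (p⁻¹)^c) := by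
      simp only [Ta, hLa, pow_add]
      rw [hkdef]
      linear_combination ((p⁻¹) ^ La (a, b, c, d) * (p⁻¹)^c) * hFa
    exact main_ineq hp0 hq hlam0 hlam1' n r c (r-a-c) (r-c-d) k _ _ hTpos heq
      (by omega) (by omega) (by omega) (by omega) (by omega) hkl hkh hL2 hr3 h18 hn1 h8r
  · -- bump d
    simp only [bump, coordv] at hα' hmem' ⊢
    norm_num at hα' hmem' ⊢
    obtain ⟨-, -, h1, h2⟩ := hmem'
    have h1' : b + (d + 1) ≤ r := by omega
    have h2' : c + (d + 1) ≤ r := by omega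
    have hFa := Fa_bump3 n r a b c d h1' h2'
    have hLa : La (a, b, c, d+1) = La (a, b, c, d) + d := by
      simp [La, choose2_succ]; ring
    have heq : Ta n r p (a, b, c, d+1) * (((d:ℝ)+1) * ((k:ℝ)+1))
        = Ta n r p (a, b, c, d) * (((r-b-d : ℕ):ℝ) * ((r-c-d : ℕ):ℝ) * (p⁻¹)^d) := by
      simp only [Ta, hLa, pow_add]
      rw [hkdef]
      linear_combination ((p⁻¹) ^ La (a, b, c, d) * (p⁻¹)^d) * hFa
    exact main_ineq hp0 hq hlam0 hlam1' n r d (r-b-d) (r-c-d) k _ _ hTpos heq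
      (by omega) (by omega) (by omega) (by omega) (by omega) hkl hkh hL2 hr3 h18 hn1 h8r

end
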